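/- Let G be a connected finite simple graph of order n ≥ 2, let uv be an edge of G, and let U = {tu : t ∈ N(u)} ∪ ({sv : s ∈ N(v)} \ {rv : r ∈ N(u) ∩ N(v)}), i.e., U consists of all edges incident to u together with all edges incident to v except those joining v to a common neighbor of u and v. Then γ_dR(G − U) > γ_dR(G). -/
import Mathlib


/-- A double Roman dominating function (DRDF) on a graph `G`: a function
`f : V → ℕ` taking values in `{0,1,2,3}` such that every vertex assigned `0`
has a neighbor assigned `3` or two distinct neighbors assigned `2`, and every
vertex assigned `1` has a neighbor assigned at least `2`. -/
def IsDRDF {V : Type*} (G : SimpleGraph V) (f : V → ℕ) : Prop :=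
  (∀ v, f v ≤ 3) ∧
  (∀ v, f v = 0 →
    (∃ w, G.Adj v w ∧ f w = 3) ∨
    (∃ w₁ w₂, G.Adj v w₁ ∧ G.Adj v w₂ ∧ w₁ ≠ w₂ ∧ f w₁ = 2 ∧ f w₂ = 2)) ∧
  (∀ v, f v = 1 → ∃ w, G.Adj v w ∧ 2 ≤ f w)

/-- The double Roman domination number `γ_dR(G)`: the minimum weight of a DRDF on `G`. -/
noncomputable def gammaDR {V : Type*} [Fintype V] (G : SimpleGraph V) : ℕ :=
  sInf {k | ∃ f : V → ℕ, IsDRDF G f ∧ ∑ v, f v = k}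

/-- The double Roman bondage number `b_dR(G)`: the minimum cardinality of a set
`B` of edges of `G` such that `γ_dR(G - B) > γ_dR(G)`. -/
noncomputable def bDR {V : Type*} [Fintype V] (G : SimpleGraph V) : ℕ :=
  sInf {k | ∃ B : Finset (Sym2 V), ↑B ⊆ G.edgeSet ∧ B.card = k ∧
    gammaDR G < gammaDR (G.deleteEdges ↑B)}


lemma isDRDF_three {V : Type*} (G : SimpleGraph V) : IsDRDF G (fun _ => 3) :=
  ⟨fun _ => le_refl 3, fun _ h => by simp at h, fun _ h => by simp at h⟩

/-- If `G` is a connected graph of order `n ≥ 2`, `uv ∈ E(G)`, and `U` consists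
of all edges incident to `u` together with all edges incident to `v` except
those joining `v` to a common neighbor of `u` and `v`, then
`γ_dR(G − U) > γ_dR(G)`. -/
theorem gammaDR_deleteEdges_gt {V : Type*} [Fintype V]
    (G : SimpleGraph V) (hconn : G.Connected) (hn : 2 ≤ Fintype.card V)
    (u v : V) (huv : G.Adj u v) :
    gammaDR G < gammaDR (G.deleteEdges
      ({e | ∃ t, G.Adj u t ∧ e = s(t, u)} ∪
        ({e | ∃ s', G.Adj v s' ∧ e = s(s', v)} \
          {e | ∃ r, G.Adj u r ∧ G.Adj v r ∧ e = s(r, v)}))) := by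
  classical
  set S : Set (Sym2 V) := ({e | ∃ t, G.Adj u t ∧ e = s(t, u)} ∪
        ({e | ∃ s', G.Adj v s' ∧ e = s(s', v)} \
          {e | ∃ r, G.Adj u r ∧ G.Adj v r ∧ e = s(r, v)})) with hS
  set G' := G.deleteEdges S with hG'
  have hsub : ∀ x w : V, G'.Adj x w → G.Adj x w := by
    intro x w h
    rw [hG', SimpleGraph.deleteEdges_adj] at h
    exact h.1
  -- u is isolated in G'
  have hu_iso : ∀ w : V, ¬ G'.Adj u w := by
    intro w h
    rw [hG', SimpleGraph.deleteEdges_adj] at h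
    exact h.2 (Or.inl ⟨w, h.1, Sym2.eq_swap⟩)
  -- every G'-neighbor of v is a G-neighbor of u
  have hv_key : ∀ w : V, G'.Adj v w → G.Adj u w := by
    intro w h
    rw [hG', SimpleGraph.deleteEdges_adj] at h
    obtain ⟨hvw, hnS⟩ := h
    have hB : s(v, w) ∈ {e | ∃ s', G.Adj v s' ∧ e = s(s', v)} :=
      ⟨w, hvw, Sym2.eq_swap⟩
    have hC : s(v, w) ∈ {e | ∃ r, G.Adj u r ∧ G.Adj v r ∧ e = s(r, v)} := by
      by_contra hC
      exact hnS (Or.inr ⟨hB, hC⟩)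
    obtain ⟨r, hur, hvr, heq⟩ := hC
    rcases Sym2.eq_iff.mp heq with ⟨h1, h2⟩ | ⟨h1, h2⟩
    · exact absurd h2.symm hvw.ne
    · subst h2; exact hur
  -- any DRDF on G' assigns ≥ 2 to u
  have hu2 : ∀ f : V → ℕ, IsDRDF G' f → 2 ≤ f u := by
    intro f ⟨_, h0, h1⟩
    by_contra h
    interval_cases hfu : f u
    · rcases h0 u hfu with ⟨w, hw, _⟩ | ⟨w, _, hw, _⟩
      · exact hu_iso w hw
      · exact hu_iso w hw
    · obtain ⟨w, hw, _⟩ := h1 u hfu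
      exact hu_iso w hw
  -- nonemptiness
  have key : ∀ f' : V → ℕ, IsDRDF G' f' →
      ∃ f : V → ℕ, IsDRDF G f ∧ ∑ x, f x < ∑ x, f' x := by
    intro f' hf'
    obtain ⟨hb', h0', h1'⟩ := hf'
    have hfu2 : 2 ≤ f' u := hu2 f' ⟨hb', h0', h1'⟩
    -- witnesses of other vertices are not u
    have hnu : ∀ x w : V, G'.Adj x w → w ≠ u := by
      intro x w h hw
      exact hu_iso x (hw ▸ h.symm)
    set c : ℕ := if f' v = 0 then 0 else 1 with hc
    set f : V → ℕ := Function.update f' u c with hf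
    have hfval : ∀ w : V, w ≠ u → f w = f' w := by
      intro w hw; rw [hf, Function.update_of_ne hw]
    have hfu : f u = c := by rw [hf, Function.update_self]
    have hvne : v ≠ u := huv.symm.ne
    clear_value c f
    have hDRDF : IsDRDF G f := by
      refine ⟨?_, ?_, ?_⟩
      · intro x
        by_cases hx : x = u
        · subst hx; rw [hfu, hc]; split <;> omega
        · rw [hfval x hx]; exact hb' x
      · intro x hx
        by_cases hxu : x = u
        · subst hxu
          rw [hfu] at hx
          have hv0 : f' v = 0 := by
            by_contra h; rw [hc, if_neg h] at hx; exact one_ne_zero hx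
          rcases h0' v hv0 with ⟨w, hw, hw3⟩ | ⟨w₁, w₂, hw1, hw2, hne, hv1, hv2⟩
          · exact Or.inl ⟨w, hv_key w hw, by rw [hfval w (hnu v w hw)]; exact hw3⟩
          · exact Or.inr ⟨w₁, w₂, hv_key w₁ hw1, hv_key w₂ hw2, hne,
              by rw [hfval w₁ (hnu v w₁ hw1)]; exact hv1,
              by rw [hfval w₂ (hnu v w₂ hw2)]; exact hv2⟩
        · rw [hfval x hxu] at hx
          rcases h0' x hx with ⟨w, hw, hw3⟩ | ⟨w₁, w₂, hw1, hw2, hne, hv1, hv2⟩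
          · exact Or.inl ⟨w, hsub x w hw, by rw [hfval w (hnu x w hw)]; exact hw3⟩
          · exact Or.inr ⟨w₁, w₂, hsub x w₁ hw1, hsub x w₂ hw2, hne,
              by rw [hfval w₁ (hnu x w₁ hw1)]; exact hv1,
              by rw [hfval w₂ (hnu x w₂ hw2)]; exact hv2⟩
      · intro x hx
        by_cases hxu : x = u
        · subst hxu
          rw [hfu] at hx
          have hvne0 : f' v ≠ 0 := by
            intro h; rw [hc, if_pos h] at hx; exact one_ne_zero hx.symm
          rcases Nat.lt_or_ge (f' v) 2 with h2 | h2
          · have hv1 : f' v = 1 := by omega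
            obtain ⟨w, hw, hw2⟩ := h1' v hv1
            exact ⟨w, hv_key w hw, by rw [hfval w (hnu v w hw)]; exact hw2⟩
          · exact ⟨v, huv, by rw [hfval v hvne]; exact h2⟩
        · rw [hfval x hxu] at hx
          obtain ⟨w, hw, hw2⟩ := h1' x hx
          exact ⟨w, hsub x w hw, by rw [hfval w (hnu x w hw)]; exact hw2⟩
    have hsumlt : ∑ x, f x < ∑ x, f' x := by
      have h1 : ∑ x, f x = c + ∑ x ∈ Finset.univ \ {u}, f' x := by
        rw [hf, Finset.sum_update_of_mem (Finset.mem_univ u)]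
      have h2 : ∑ x, f' x = f' u + ∑ x ∈ Finset.univ \ {u}, f' x := by
        rw [← Finset.erase_eq]
        exact (Finset.add_sum_erase _ _ (Finset.mem_univ u)).symm
      have hclt : c < f' u := by rw [hc]; split <;> omega
      omega
    exact ⟨f, hDRDF, hsumlt⟩
  have hne' : {k | ∃ f : V → ℕ, IsDRDF G' f ∧ ∑ x, f x = k}.Nonempty :=
    ⟨_, (fun _ => 3), isDRDF_three G', rfl⟩
  obtain ⟨f', hf', hsum'⟩ := Nat.sInf_mem hne'
  obtain ⟨f, hf, hlt⟩ := key f' hf'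
  calc gammaDR G ≤ ∑ x, f x := Nat.sInf_le ⟨f, hf, rfl⟩
    _ < ∑ x, f' x := hlt
    _ = gammaDR G' := hsum'
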